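/- Under the MAR assumption, for any real cut point c, the variance of the mean-score single-observation term X = 1_{T ≥ c} · ( V·D + (1 − V)·ρ ) equals Var(X) = β(1 − β) − E[ (1 − π) · 1_{T ≥ c} · ρ(1 − ρ) ], where β = ℙ(T ≥ c, D = 1). -/

import Mathlib

open MeasureTheory ProbabilityTheory

theorem mar_aux
    {Ω : Type*} (𝒢 : MeasurableSpace Ω) [mΩ : MeasurableSpace Ω] [StandardBorelSpace Ω]
    [Nonempty Ω]
    (μ : Measure Ω) [IsProbabilityMeasure μ] {d : ℕ}
    (T : Ω → ℝ) (A : Ω → (Fin d → ℝ)) (D V : Ω → ℝ)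
    (hT : Measurable T) (hA : Measurable A) (hD : Measurable D) (hV : Measurable V)
    (hDval : ∀ ω, D ω = 0 ∨ D ω = 1) (hVval : ∀ ω, V ω = 0 ∨ V ω = 1)
    (h𝒢 : 𝒢 = MeasurableSpace.comap (fun ω => (T ω, A ω)) inferInstance)
    (h𝒢le : 𝒢 ≤ mΩ)
    (MAR : CondIndepFun (mΩ := mΩ) 𝒢 h𝒢le V D μ) (c : ℝ) :
    variance (fun ω => (if c ≤ T ω then (1 : ℝ) else 0)
        * (V ω * D ω + (1 - V ω) * (μ[D | 𝒢]) ω)) μ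
      = (μ {ω | c ≤ T ω ∧ D ω = 1}).toReal * (1 - (μ {ω | c ≤ T ω ∧ D ω = 1}).toReal)
        - ∫ ω, (1 - (μ[V | 𝒢]) ω) * (if c ≤ T ω then (1 : ℝ) else 0)
            * ((μ[D | 𝒢]) ω * (1 - (μ[D | 𝒢]) ω)) ∂μ := by
  classical
  haveI : IsFiniteMeasure (μ.trim h𝒢le) := isFiniteMeasure_trim h𝒢le
  haveI : SigmaFinite (μ.trim h𝒢le) := inferInstance
  set ρ : Ω → ℝ := μ[D | 𝒢] with hρdef
  set π : Ω → ℝ := μ[V | 𝒢] with hπdef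
  have hρsm : StronglyMeasurable[𝒢] ρ := stronglyMeasurable_condExp
  have hπsm : StronglyMeasurable[𝒢] π := stronglyMeasurable_condExp
  have hρm : Measurable ρ := (hρsm.mono h𝒢le).measurable
  have hπm : Measurable π := (hπsm.mono h𝒢le).measurable
  set S : Set Ω := {ω | c ≤ T ω} with hSdef
  have hS𝒢 : MeasurableSet[𝒢] S := by
    rw [h𝒢]
    exact ⟨{p : ℝ × (Fin d → ℝ) | c ≤ p.1},
      measurableSet_le measurable_const measurable_fst, rfl⟩
  have hS : MeasurableSet S := h𝒢le S hS𝒢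
  -- boundedness / integrability helper
  have hbdd : ∀ f : Ω → ℝ, AEStronglyMeasurable f μ → (∀ᵐ ω ∂μ, ‖f ω‖ ≤ 1) →
      Integrable f μ := fun f hm hb => (integrable_const (1 : ℝ)).mono' hm hb
  have hDint : Integrable D μ := hbdd D hD.aestronglyMeasurable
    (ae_of_all _ fun ω => by rcases hDval ω with h | h <;> simp [h])
  have hVint : Integrable V μ := hbdd V hV.aestronglyMeasurable
    (ae_of_all _ fun ω => by rcases hVval ω with h | h <;> simp [h])
  have hVDint : Integrable (fun ω => V ω * D ω) μ :=
    hbdd _ (hV.mul hD).aestronglyMeasurable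
      (ae_of_all _ fun ω => by rcases hVval ω with h | h <;> rcases hDval ω with h' | h' <;>
        simp [h, h'])
  have hρ0 : ∀ᵐ ω ∂μ, 0 ≤ ρ ω := by
    have := condExp_nonneg (μ := μ) (m := 𝒢) (f := D)
      (ae_of_all _ fun ω => by rcases hDval ω with h | h <;> simp [h])
    filter_upwards [this] with ω h using h
  have hρ1 : ∀ᵐ ω ∂μ, ρ ω ≤ 1 := by
    have h := condExp_mono (μ := μ) (m := 𝒢) hDint (integrable_const (1 : ℝ))
      (ae_of_all _ fun ω => by rcases hDval ω with h | h <;> simp [h])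
    rw [condExp_const h𝒢le] at h
    filter_upwards [h] with ω h using h
  have hπ0 : ∀ᵐ ω ∂μ, 0 ≤ π ω := by
    have := condExp_nonneg (μ := μ) (m := 𝒢) (f := V)
      (ae_of_all _ fun ω => by rcases hVval ω with h | h <;> simp [h])
    filter_upwards [this] with ω h using h
  have hπ1 : ∀ᵐ ω ∂μ, π ω ≤ 1 := by
    have h := condExp_mono (μ := μ) (m := 𝒢) hVint (integrable_const (1 : ℝ))
      (ae_of_all _ fun ω => by rcases hVval ω with h | h <;> simp [h])
    rw [condExp_const h𝒢le] at h
    filter_upwards [h] with ω h using h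
  -- MAR consequence: E[VD | 𝒢] = π ρ  a.e.
  have hV_eq : V = Set.indicator (V ⁻¹' {1}) (fun _ => (1 : ℝ)) := by
    funext ω; rcases hVval ω with h | h <;> simp [Set.indicator_apply, h]
  have hD_eq : D = Set.indicator (D ⁻¹' {1}) (fun _ => (1 : ℝ)) := by
    funext ω; rcases hDval ω with h | h <;> simp [Set.indicator_apply, h]
  have hVD_eq : (fun ω => V ω * D ω)
      = Set.indicator (V ⁻¹' {1} ∩ D ⁻¹' {1}) (fun _ => (1 : ℝ)) := by
    funext ω
    rcases hVval ω with h | h <;> rcases hDval ω with h' | h' <;>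
      simp [Set.indicator_apply, Set.mem_inter_iff, h, h']
  have hMAR : μ[fun ω => V ω * D ω | 𝒢] =ᵐ[μ] fun ω => π ω * ρ ω := by
    have h := (condIndepFun_iff_condExp_inter_preimage_eq_mul (hm' := h𝒢le)
      hV hD).mp MAR {1} {1} (measurableSet_singleton 1) (measurableSet_singleton 1)
    have e1 : μ[fun ω => V ω * D ω | 𝒢] = μ⟦V ⁻¹' {1} ∩ D ⁻¹' {1} | 𝒢⟧ := by
      rw [hVD_eq]
    have e2 : π = μ⟦V ⁻¹' {1} | 𝒢⟧ := by rw [hπdef]; conv_lhs => rw [hV_eq]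
    have e3 : ρ = μ⟦D ⁻¹' {1} | 𝒢⟧ := by rw [hρdef]; conv_lhs => rw [hD_eq]
    rw [e1, e2, e3]; exact h
  -- pull-out computations
  have h1V : μ[(fun ω => 1 - V ω) | 𝒢] =ᵐ[μ] fun ω => 1 - π ω := by
    have h := condExp_sub (μ := μ) (m := 𝒢) (f := fun _ => (1 : ℝ)) (g := V)
      (integrable_const 1) hVint
    rw [condExp_const h𝒢le] at h
    exact h
  have h1Vint : Integrable (fun ω => 1 - V ω) μ := (integrable_const 1).sub hVint
  have hρ1Vint : Integrable (ρ * fun ω => 1 - V ω) μ := by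
    refine hbdd _ ?_ ?_
    · exact (hρm.mul (measurable_const.sub hV)).aestronglyMeasurable
    · filter_upwards [hρ0, hρ1] with ω h0 h1
      rcases hVval ω with h | h <;>
        simp only [Pi.mul_apply, h, Real.norm_eq_abs] <;> rw [abs_le] <;>
        constructor <;> nlinarith
  have hpull1 : μ[ρ * (fun ω => 1 - V ω) | 𝒢] =ᵐ[μ] fun ω => ρ ω * (1 - π ω) := by
    have h := condExp_mul_of_stronglyMeasurable_left hρsm hρ1Vint h1Vint
    refine h.trans ?_
    filter_upwards [h1V] with ω hω
    simp only [Pi.mul_apply, hω]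
  set ρ2 : Ω → ℝ := fun ω => ρ ω * ρ ω with hρ2def
  have hρ2sm : StronglyMeasurable[𝒢] ρ2 := hρsm.mul hρsm
  have hρ21Vint : Integrable (ρ2 * fun ω => 1 - V ω) μ := by
    refine hbdd _ ?_ ?_
    · exact ((hρm.mul hρm).mul (measurable_const.sub hV)).aestronglyMeasurable
    · filter_upwards [hρ0, hρ1] with ω h0 h1
      rcases hVval ω with h | h <;>
        simp only [Pi.mul_apply, hρ2def, h, Real.norm_eq_abs] <;> rw [abs_le] <;>
        constructor <;> nlinarith
  have hpull2 : μ[ρ2 * (fun ω => 1 - V ω) | 𝒢] =ᵐ[μ] fun ω => ρ2 ω * (1 - π ω) := by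
    have h := condExp_mul_of_stronglyMeasurable_left hρ2sm hρ21Vint h1Vint
    refine h.trans ?_
    filter_upwards [h1V] with ω hω
    simp only [Pi.mul_apply, hω]
  -- conditional expectations of Y and Y2
  set Y : Ω → ℝ := fun ω => V ω * D ω + (1 - V ω) * ρ ω with hYdef
  set Y2 : Ω → ℝ := fun ω => V ω * D ω + (1 - V ω) * ρ2 ω with hY2def
  have hYalt : Y = (fun ω => V ω * D ω) + ρ * (fun ω => 1 - V ω) := by
    funext ω; simp only [hYdef, Pi.add_apply, Pi.mul_apply]; ring
  have hY2alt : Y2 = (fun ω => V ω * D ω) + ρ2 * (fun ω => 1 - V ω) := by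
    funext ω; simp only [hY2def, Pi.add_apply, Pi.mul_apply]; ring
  have hYint : Integrable Y μ := by
    rw [hYalt]; exact hVDint.add hρ1Vint
  have hY2int : Integrable Y2 μ := by
    rw [hY2alt]; exact hVDint.add hρ21Vint
  have hcondY : μ[Y | 𝒢] =ᵐ[μ] ρ := by
    rw [hYalt]
    refine (condExp_add hVDint hρ1Vint 𝒢).trans ?_
    filter_upwards [hMAR, hpull1] with ω h1 h2
    simp only [Pi.add_apply, h1, h2]
    ring
  have hcondY2 : μ[Y2 | 𝒢] =ᵐ[μ] fun ω => ρ ω - (1 - π ω) * (ρ ω * (1 - ρ ω)) := by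
    rw [hY2alt]
    refine (condExp_add hVDint hρ21Vint 𝒢).trans ?_
    filter_upwards [hMAR, hpull2] with ω h1 h2
    simp only [Pi.add_apply, h1, h2]; simp only [hρ2def]
    ring
  -- indicator trick
  have hind : ∀ f : Ω → ℝ,
      (∫ ω, (if c ≤ T ω then (1 : ℝ) else 0) * f ω ∂μ) = ∫ ω in S, f ω ∂μ := by
    intro f
    rw [← integral_indicator hS]
    congr 1
    funext ω
    by_cases h : c ≤ T ω <;> simp [Set.indicator_apply, hSdef, h]
  -- mean
  have hβ : ∫ ω in S, ρ ω ∂μ = (μ {ω | c ≤ T ω ∧ D ω = 1}).toReal := by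
    rw [hρdef, setIntegral_condExp h𝒢le hDint hS𝒢]
    have e : {ω | c ≤ T ω ∧ D ω = 1} = S ∩ D ⁻¹' {1} := by
      ext ω; simp [hSdef, Set.mem_inter_iff]
    conv_lhs => rw [hD_eq]
    rw [setIntegral_indicator (hD (measurableSet_singleton 1)), setIntegral_const, e]
    simp [Measure.real]
  have hEX : (∫ ω, (if c ≤ T ω then (1 : ℝ) else 0) * Y ω ∂μ)
      = (μ {ω | c ≤ T ω ∧ D ω = 1}).toReal := by
    rw [hind Y, ← setIntegral_condExp h𝒢le hYint hS𝒢,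
      integral_congr_ae (ae_restrict_of_ae hcondY), hβ]
  -- second moment
  have hGint : Integrable (fun ω => (1 - π ω) * (ρ ω * (1 - ρ ω))) μ := by
    refine hbdd _ ?_ ?_
    · exact ((measurable_const.sub hπm).mul
        (hρm.mul (measurable_const.sub hρm))).aestronglyMeasurable
    · filter_upwards [hρ0, hρ1, hπ0, hπ1] with ω a b e f
      rw [Real.norm_eq_abs, abs_le]
      have h0 : 0 ≤ (1 - π ω) * (ρ ω * (1 - ρ ω)) :=
        mul_nonneg (by linarith) (mul_nonneg a (by linarith))
      have h1 : (1 - π ω) * (ρ ω * (1 - ρ ω)) ≤ 1 :=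
        mul_le_one₀ (by linarith) (mul_nonneg a (by linarith))
          (mul_le_one₀ b (by linarith) (by linarith))
      constructor <;> linarith
  have hEX2 : (∫ ω, (if c ≤ T ω then (1 : ℝ) else 0) * Y2 ω ∂μ)
      = (μ {ω | c ≤ T ω ∧ D ω = 1}).toReal
        - ∫ ω in S, (1 - π ω) * (ρ ω * (1 - ρ ω)) ∂μ := by
    rw [hind Y2, ← setIntegral_condExp h𝒢le hY2int hS𝒢,
      integral_congr_ae (ae_restrict_of_ae hcondY2),
      integral_sub integrable_condExp.integrableOn hGint.integrableOn, hβ]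
  -- the subtracted term in the goal
  have hJ : (∫ ω, (1 - π ω) * (if c ≤ T ω then (1 : ℝ) else 0)
      * (ρ ω * (1 - ρ ω)) ∂μ) = ∫ ω in S, (1 - π ω) * (ρ ω * (1 - ρ ω)) ∂μ := by
    rw [← hind fun ω => (1 - π ω) * (ρ ω * (1 - ρ ω))]
    congr 1; funext ω; ring
  -- variance
  have hL : (fun ω => (if c ≤ T ω then (1 : ℝ) else 0)
      * (V ω * D ω + (1 - V ω) * ρ ω))
      = fun ω => (if c ≤ T ω then (1 : ℝ) else 0) * Y ω := rfl
  set X : Ω → ℝ := fun ω => (if c ≤ T ω then (1 : ℝ) else 0) * Y ω with hXdef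
  have hXm : Measurable X := by
    refine Measurable.mul ?_ ((hV.mul hD).add ((measurable_const.sub hV).mul hρm))
    exact Measurable.ite (measurableSet_le measurable_const hT) measurable_const
      measurable_const
  have hXmem : MemLp X 2 μ := by
    refine MemLp.of_bound hXm.aestronglyMeasurable 1 ?_
    filter_upwards [hρ0, hρ1] with ω h0 h1
    have hXω : X ω = (if c ≤ T ω then (1 : ℝ) else 0) * Y ω := rfl
    rw [Real.norm_eq_abs, hXω, abs_mul]
    have hI : |if c ≤ T ω then (1 : ℝ) else 0| ≤ 1 := by split <;> simp
    have hYb : |Y ω| ≤ 1 := by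
      rcases hVval ω with h | h <;> rcases hDval ω with h' | h' <;>
        simp only [hYdef, h, h'] <;> rw [abs_le] <;> constructor <;> nlinarith
    exact mul_le_one₀ hI (abs_nonneg _) hYb
  have hsq : X ^ 2 = fun ω => (if c ≤ T ω then (1 : ℝ) else 0) * Y2 ω := by
    funext ω
    have hXω : X ω = (if c ≤ T ω then (1 : ℝ) else 0) * Y ω := rfl
    rw [Pi.pow_apply, hXω]
    rcases hVval ω with h | h <;> rcases hDval ω with h' | h' <;>
      by_cases hc : c ≤ T ω <;>
      simp only [hYdef, hY2def, hρ2def, h, h', hc, if_true, if_false, reduceIte] <;> ring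
  rw [hL, variance_eq_sub hXmem, hsq, hEX2, hXdef, hEX, hJ]
  ring

/-- Under MAR, for any real cut point `c`, the variance of the
mean-score single-observation term `X = 1_{T ≥ c} · (V·D + (1 − V)·ρ)` equals
`Var(X) = β(1 − β) − E[(1 − π) · 1_{T ≥ c} · ρ(1 − ρ)]`, where `β = ℙ(T ≥ c, D = 1)`. -/
theorem mar_variance_mean_score_beta
    {Ω : Type*} [mΩ : MeasurableSpace Ω] [StandardBorelSpace Ω] [Nonempty Ω]
    (μ : Measure Ω) [IsProbabilityMeasure μ] {d : ℕ}
    (T : Ω → ℝ) (A : Ω → (Fin d → ℝ)) (D V : Ω → ℝ)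
    (hT : Measurable T) (hA : Measurable A) (hD : Measurable D) (hV : Measurable V)
    (hDval : ∀ ω, D ω = 0 ∨ D ω = 1) (hVval : ∀ ω, V ω = 0 ∨ V ω = 1)
    (𝒢 : MeasurableSpace Ω)
    (h𝒢 : 𝒢 = MeasurableSpace.comap (fun ω => (T ω, A ω)) inferInstance)
    (h𝒢le : 𝒢 ≤ mΩ)
    (MAR : CondIndepFun (mΩ := mΩ) 𝒢 h𝒢le V D μ) (c : ℝ) :
    variance (fun ω => (if c ≤ T ω then (1 : ℝ) else 0)
        * (V ω * D ω + (1 - V ω) * (μ[D | 𝒢]) ω)) μ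
      = (μ {ω | c ≤ T ω ∧ D ω = 1}).toReal * (1 - (μ {ω | c ≤ T ω ∧ D ω = 1}).toReal)
        - ∫ ω, (1 - (μ[V | 𝒢]) ω) * (if c ≤ T ω then (1 : ℝ) else 0)
            * ((μ[D | 𝒢]) ω * (1 - (μ[D | 𝒢]) ω)) ∂μ :=
  mar_aux (mΩ := mΩ) 𝒢 μ T A D V hT hA hD hV hDval hVval h𝒢 h𝒢le MAR c
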